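/- Let (Ŝ, B̂) be any solution of the dirty-model program. Then for every (j,k) ∈ Supp(Ŝ), |b̂_j^(k)| = max_l |b̂_j^(l)| (i.e., the corresponding entry of B̂ attains the maximum magnitude in its row). -/

import Mathlib

open scoped BigOperators Classical

noncomputable section

/-- The objective of the dirty-model program:
`(1/(2n)) Σ_k ‖y^(k) − X^(k)(s^(k) + b^(k))‖₂² + λ_s ‖S‖_{1,1} + λ_b ‖B‖_{1,∞}`. -/
def dirtyObj (n p r : ℕ) (X : Fin r → Matrix (Fin n) (Fin p) ℝ)
    (y : Fin r → Fin n → ℝ) (lamS lamB : ℝ)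
    (S B : Matrix (Fin p) (Fin r) ℝ) : ℝ :=
  (1 / (2 * (n : ℝ))) *
      ∑ k, ∑ i, (y k i - ∑ j, X k i j * (S j k + B j k)) ^ 2
    + lamS * (∑ j, ∑ k, |S j k|)
    + lamB * (∑ j, ⨆ k, |B j k|)

/-- `(Ŝ, B̂)` is a solution (global minimizer) of the dirty-model program. -/
def IsDirtySol (n p r : ℕ) (X : Fin r → Matrix (Fin n) (Fin p) ℝ)
    (y : Fin r → Fin n → ℝ) (lamS lamB : ℝ)
    (Shat Bhat : Matrix (Fin p) (Fin r) ℝ) : Prop :=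
  ∀ S B : Matrix (Fin p) (Fin r) ℝ,
    dirtyObj n p r X y lamS lamB Shat Bhat ≤ dirtyObj n p r X y lamS lamB S B

/-- For any solution `(Ŝ, B̂)` of the dirty-model program and any
`(j,k)` in the support of `Ŝ`, the entry `|b̂_j^(k)|` attains the maximum magnitude
in its row: `|b̂_j^(k)| = max_l |b̂_j^(l)|`. -/
theorem dirty_model_support_attains_rowmax
    (n p r : ℕ) (hn : 1 ≤ n) (hp : 1 ≤ p) (hr : 1 ≤ r)
    (X : Fin r → Matrix (Fin n) (Fin p) ℝ) (y : Fin r → Fin n → ℝ)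
    (lamS lamB : ℝ) (hlamS : 0 < lamS) (hlamB : 0 < lamB)
    (Shat Bhat : Matrix (Fin p) (Fin r) ℝ)
    (hsol : IsDirtySol n p r X y lamS lamB Shat Bhat)
    (j : Fin p) (k : Fin r) (hjk : Shat j k ≠ 0) :
    |Bhat j k| = ⨆ l, |Bhat j l| := by
  haveI : Nonempty (Fin r) := ⟨⟨0, hr⟩⟩
  by_contra hne
  set m := ⨆ l, |Bhat j l| with hm
  have hle : ∀ l, |Bhat j l| ≤ m := fun l =>
    le_ciSup (f := fun l => |Bhat j l|) (Set.Finite.bddAbove (Set.finite_range _)) l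
  have hlt : |Bhat j k| < m := lt_of_le_of_ne (hle k) hne
  obtain ⟨l₀, hl₀⟩ : ∃ l₀, |Bhat j l₀| = m := by
    obtain ⟨l₀, h⟩ := exists_eq_ciSup_of_finite (f := fun l => |Bhat j l|)
    exact ⟨l₀, h⟩
  have hl₀k : l₀ ≠ k := by rintro rfl; exact absurd hl₀ (ne_of_lt hlt)
  set s := Shat j k with hs
  set ε := min |s| (m - |Bhat j k|) with hε
  have hε0 : 0 < ε := lt_min (abs_pos.mpr hjk) (by linarith)
  have hε1 : ε ≤ |s| := min_le_left _ _
  have hε2 : ε ≤ m - |Bhat j k| := min_le_right _ _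
  set d := ε * Real.sign s with hd
  have hsd : |s - d| = |s| - ε := by
    rcases lt_or_gt_of_ne hjk with h | h
    · have hd' : d = -ε := by rw [hd, Real.sign_of_neg h]; ring
      have habs : |s| = -s := abs_of_neg h
      have h2 : ε ≤ -s := by rwa [habs] at hε1
      rw [hd', habs, show s - -ε = s + ε by ring, abs_of_nonpos (by linarith)]
      ring
    · have hd' : d = ε := by rw [hd, Real.sign_of_pos h]; ring
      have habs : |s| = s := abs_of_pos h
      have h2 : ε ≤ s := by rwa [habs] at hε1
      rw [hd', habs, abs_of_nonneg (by linarith)]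
  have hdabs : |d| = ε := by
    rcases lt_or_gt_of_ne hjk with h | h
    · have hd' : d = -ε := by rw [hd, Real.sign_of_neg h]; ring
      rw [hd', abs_neg, abs_of_pos hε0]
    · have hd' : d = ε := by rw [hd, Real.sign_of_pos h]; ring
      rw [hd', abs_of_pos hε0]
  set S' : Matrix (Fin p) (Fin r) ℝ :=
    fun a b => if a = j ∧ b = k then s - d else Shat a b with hS'
  set B' : Matrix (Fin p) (Fin r) ℝ :=
    fun a b => if a = j ∧ b = k then Bhat j k + d else Bhat a b with hB'
  -- the sums S'+B' agree with Shat+Bhat entrywise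
  have hsum : ∀ a b, S' a b + B' a b = Shat a b + Bhat a b := by
    intro a b
    by_cases h : a = j ∧ b = k
    · obtain ⟨rfl, rfl⟩ := h
      simp [hS', hB', hs]
    · simp [hS', hB', h]
  -- the ℓ1 term decreases by ε
  have hS1 : ∑ a, ∑ b, |S' a b| = (∑ a, ∑ b, |Shat a b|) - ε := by
    have inner : ∀ a, ∑ b, |S' a b| = (∑ b, |Shat a b|) - (if a = j then ε else 0) := by
      intro a
      by_cases ha : a = j
      · subst ha
        rw [if_pos rfl]
        have : ∀ b, |S' a b| = |Shat a b| - (if b = k then ε else 0) := by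
          intro b
          by_cases hb : b = k
          · subst hb
            have h1 : S' a b = s - d := by simp [hS']
            rw [h1, if_pos rfl, hsd, hs]
          · simp [hS', hb]
        rw [Finset.sum_congr rfl (fun b _ => this b), Finset.sum_sub_distrib,
          Finset.sum_ite_eq' Finset.univ k (fun _ => ε)]
        simp
      · rw [if_neg ha]
        have : ∀ b, |S' a b| = |Shat a b| := by
          intro b; simp [hS', ha]
        simp [this]
    rw [Finset.sum_congr rfl (fun a _ => inner a), Finset.sum_sub_distrib,
      Finset.sum_ite_eq' Finset.univ j (fun _ => ε)]
    simp
  -- the row-sup term is unchanged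
  have hB1 : ∑ a, (⨆ l, |B' a l|) = ∑ a, ⨆ l, |Bhat a l| := by
    apply Finset.sum_congr rfl
    intro a _
    by_cases ha : a = j
    · subst ha
      have hrow : (⨆ l, |B' a l|) = m := by
        apply le_antisymm
        · apply ciSup_le
          intro l
          by_cases hl : l = k
          · subst hl
            have h1 : B' a l = Bhat a l + d := by simp [hB']
            rw [h1]
            calc |Bhat a l + d| ≤ |Bhat a l| + |d| := abs_add_le _ _
              _ = |Bhat a l| + ε := by rw [hdabs]
              _ ≤ m := by linarith
          · simp only [hB', hl, and_false, if_false]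
            exact hle l
        · have : |B' a l₀| = m := by
            simp only [hB', hl₀k, and_false, if_false]
            exact hl₀
          rw [← this]
          exact le_ciSup (f := fun l => |B' a l|) (Set.Finite.bddAbove (Set.finite_range _)) l₀
      rw [hrow, hm]
    · have : ∀ l, B' a l = Bhat a l := by
        intro l; simp [hB', ha]
      simp [this]
  -- compare objectives
  have hobj : dirtyObj n p r X y lamS lamB S' B'
      = dirtyObj n p r X y lamS lamB Shat Bhat - lamS * ε := by
    unfold dirtyObj
    rw [hS1, hB1]
    have hloss : ∑ k', ∑ i, (y k' i - ∑ a, X k' i a * (S' a k' + B' a k')) ^ 2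
        = ∑ k', ∑ i, (y k' i - ∑ a, X k' i a * (Shat a k' + Bhat a k')) ^ 2 := by
      apply Finset.sum_congr rfl; intro k' _
      apply Finset.sum_congr rfl; intro i _
      congr 2
      apply Finset.sum_congr rfl; intro a _
      rw [hsum]
    rw [hloss]
    ring
  have := hsol S' B'
  rw [hobj] at this
  nlinarith
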